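/- arXiv:2505.05005 — 7 statements merged into one kernel-verified Lean document; each statement's English description precedes it below -/
import Mathlib

section
/- If two rational-valued sequences (ρ_{n,0}) and (ρ_{n,3}) both satisfy the recurrence (n+1)^5·x_{n+1} − 32(2n+1)(8n^4+16n^3+20n^2+12n+3)·x_n + 2^{16}·n^5·x_{n−1} = 0 for n ≥ 1, with initial data ρ_{0,0} = 0, ρ_{0,3} = 768, ρ_{1,0} = −1024, ρ_{1,3} = 73728, then for all n ≥ 0 one has ρ_{n,0}·ρ_{n+1,3} − ρ_{n+1,0}·ρ_{n,3} = 3·2^{16n+18} / (n+1)^5; in particular this quantity is nonzero. -/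
theorem determinant_formula
    (ρ₀ ρ₃ : ℕ → ℚ)
    (hrec₀ : ∀ n : ℕ, 1 ≤ n →
      ((n : ℚ) + 1) ^ 5 * ρ₀ (n + 1)
        - 32 * (2 * n + 1) * (8 * (n : ℚ) ^ 4 + 16 * n ^ 3 + 20 * n ^ 2 + 12 * n + 3) * ρ₀ n
        + 2 ^ 16 * (n : ℚ) ^ 5 * ρ₀ (n - 1) = 0)
    (hrec₃ : ∀ n : ℕ, 1 ≤ n →
      ((n : ℚ) + 1) ^ 5 * ρ₃ (n + 1)
        - 32 * (2 * n + 1) * (8 * (n : ℚ) ^ 4 + 16 * n ^ 3 + 20 * n ^ 2 + 12 * n + 3) * ρ₃ n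
        + 2 ^ 16 * (n : ℚ) ^ 5 * ρ₃ (n - 1) = 0)
    (h00 : ρ₀ 0 = 0) (h03 : ρ₃ 0 = 768) (h10 : ρ₀ 1 = -1024) (h13 : ρ₃ 1 = 73728) :
    ∀ n : ℕ, ρ₀ n * ρ₃ (n + 1) - ρ₀ (n + 1) * ρ₃ n = 3 * 2 ^ (16 * n + 18) / ((n : ℚ) + 1) ^ 5
      ∧ ρ₀ n * ρ₃ (n + 1) - ρ₀ (n + 1) * ρ₃ n ≠ 0 := by
  suffices h : ∀ n : ℕ, ρ₀ n * ρ₃ (n + 1) - ρ₀ (n + 1) * ρ₃ n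
      = 3 * 2 ^ (16 * n + 18) / ((n : ℚ) + 1) ^ 5 by
    intro n
    refine ⟨h n, ?_⟩
    rw [h n]
    positivity
  intro n
  induction n with
  | zero => simp [h00, h03, h10, h13]; norm_num
  | succ n ih =>
    have h0 := hrec₀ (n + 1) (by omega)
    have h3 := hrec₃ (n + 1) (by omega)
    simp only [Nat.add_sub_cancel] at h0 h3
    push_cast at h0 h3 ⊢
    have hne : ((n : ℚ) + 1) ^ 5 ≠ 0 := by positivity
    have hne2 : ((n : ℚ) + 1 + 1) ^ 5 ≠ 0 := by positivity
    have key : ((n : ℚ) + 1 + 1) ^ 5 * (ρ₀ (n + 1) * ρ₃ (n + 2) - ρ₀ (n + 2) * ρ₃ (n + 1))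
        = 2 ^ 16 * ((n : ℚ) + 1) ^ 5 * (ρ₀ n * ρ₃ (n + 1) - ρ₀ (n + 1) * ρ₃ n) := by
      linear_combination ρ₀ (n + 1) * h3 - ρ₃ (n + 1) * h0
    rw [ih] at key
    rw [show 16 * (n + 1) + 18 = (16 * n + 18) + 16 from by ring, pow_add,
      eq_div_iff hne2]
    have key2 : ((n : ℚ) + 1 + 1) ^ 5 * (ρ₀ (n + 1) * ρ₃ (n + 2) - ρ₀ (n + 2) * ρ₃ (n + 1))
        = 2 ^ 16 * (3 * 2 ^ (16 * n + 18)) := by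
      apply mul_right_cancel₀ hne
      field_simp at key
      linear_combination ((n : ℚ) + 1) ^ 5 * key
    linear_combination key2
end

section
/- Let p be a prime and n a positive integer with p > max{√(2n), 3}. For any nonnegative integer m ≤ n, p divides the central binomial coefficient C(2m, m) if and only if the least nonnegative residue of m modulo p is at least (p+1)/2. -/
theorem prime_dvd_centralBinom_iff (p n m : ℕ) (hp : p.Prime)
    (hpn : Real.sqrt (2 * n) < p) (hp3 : 3 < p) (hn : 0 < n) (hm : m ≤ n) :
    p ∣ Nat.choose (2 * m) m ↔ (p + 1) / 2 ≤ m % p := by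
  have hsq : 2 * n < p ^ 2 := by
    have h := Real.sq_sqrt (by positivity : (0:ℝ) ≤ (2 * n : ℕ))
    have : ((2 * n : ℕ) : ℝ) < (p : ℝ) ^ 2 := by
      rw [← h]
      have h0 : (0:ℝ) ≤ Real.sqrt ((2 * n : ℕ)) := Real.sqrt_nonneg _
      push_cast
      push_cast at hpn h0
      nlinarith [hpn, h0]
    exact_mod_cast this
  have h2m : 2 * m < p ^ 2 := lt_of_le_of_lt (by omega) hsq
  have hlog : Nat.log p (2 * m) < 2 := by
    rcases Nat.eq_zero_or_pos (2 * m) with h | h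
    · simp [h]
    · exact Nat.log_lt_of_lt_pow (by omega) h2m
  have hmle : m ≤ 2 * m := by omega
  have key := Nat.Prime.emultiplicity_choose (b := 2) hp hmle hlog
  have hsub : 2 * m - m = m := by omega
  rw [hsub] at key
  have hset : Finset.Ico 1 2 = {1} := rfl
  rw [hset] at key
  have hpos : 0 < Nat.choose (2 * m) m := Nat.choose_pos hmle
  have hodd : p % 2 = 1 := by
    rcases hp.eq_two_or_odd with h | h
    · omega
    · exact h
  constructor
  · intro hd
    by_contra hle
    have hnotle : ¬ p ^ 1 ≤ m % p ^ 1 + m % p ^ 1 := by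
      simp only [pow_one]
      omega
    have : emultiplicity p (Nat.choose (2 * m) m) = 0 := by
      rw [key]
      rw [Finset.filter_singleton, if_neg hnotle]
      simp
    rw [emultiplicity_eq_zero] at this
    exact this hd
  · intro hle
    by_contra hd
    have : emultiplicity p (Nat.choose (2 * m) m) = 0 := emultiplicity_eq_zero.mpr hd
    rw [key, Finset.filter_singleton, if_pos (by simp only [pow_one]; omega)] at this
    simp at this
end

section
/- Let α > β > 0 be real numbers, p a prime, and ξ ∈ ℚ_p. Suppose there exist integer sequences (a_n), (b_n) with |a_n + b_n ξ|_p ≤ exp(−αn + o(n)), max{|a_n|, |b_n|} ≤ exp(βn + o(n)), and a_n b_{n+1} − a_{n+1} b_n ≠ 0 for all n. Then ξ is irrational. -/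
open Filter

lemma padic_int_norm_lb (p : ℕ) [hp : Fact p.Prime] (m : ℤ) (hm : m ≠ 0) :
    (|m| : ℝ)⁻¹ ≤ ‖(m : ℚ_[p])‖ := by
  have h1 : ‖((m : ℚ) : ℚ_[p])‖ = padicNorm p m := Padic.eq_padicNorm _
  rw [show ((m:ℚ_[p])) = ((m:ℚ):ℚ_[p]) by push_cast; ring, h1]
  have hm' : (m:ℚ) ≠ 0 := Int.cast_ne_zero.mpr hm
  rw [padicNorm.eq_zpow_of_nonzero hm']
  rw [padicValRat.of_int]
  have hk : padicValInt p m = padicValNat p m.natAbs := rfl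
  rw [hk]
  set k := padicValNat p m.natAbs with hkdef
  have hdvd : p ^ k ∣ m.natAbs := pow_padicValNat_dvd
  have hle : p ^ k ≤ m.natAbs := Nat.le_of_dvd (Int.natAbs_pos.mpr hm) hdvd
  have hp1 : (1:ℝ) < p := by exact_mod_cast hp.out.one_lt
  push_cast
  rw [zpow_neg, zpow_natCast]
  have h2 : (0:ℝ) < (p:ℝ)^k := by positivity
  rw [inv_le_inv₀ (by positivity) h2]
  calc ((p:ℝ))^k = ((p^k : ℕ) : ℝ) := by push_cast; ring
    _ ≤ (m.natAbs : ℝ) := by exact_mod_cast hle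
    _ = |(m:ℝ)| := by rw [Nat.cast_natAbs]; push_cast; ring

theorem padic_irrationality_criterion (p : ℕ) [Fact p.Prime] (ξ : ℚ_[p])
    (α β : ℝ) (hαβ : β < α) (hβ : 0 < β)
    (a b : ℕ → ℤ)
    (h1 : ∀ ε > 0, ∀ᶠ n : ℕ in atTop,
      ‖(a n : ℚ_[p]) + (b n : ℚ_[p]) * ξ‖ ≤ Real.exp ((-α + ε) * n))
    (h2 : ∀ ε > 0, ∀ᶠ n : ℕ in atTop,
      (max |a n| |b n| : ℝ) ≤ Real.exp ((β + ε) * n))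
    (h3 : ∀ n : ℕ, 0 < n → a n * b (n + 1) - a (n + 1) * b n ≠ 0) :
    ∀ q : ℚ, ξ ≠ (q : ℚ_[p]) := by
  intro q hq
  set u : ℤ := q.num with hu
  set v : ℤ := (q.den : ℤ) with hv
  have hv0 : (0:ℤ) < v := Int.natCast_pos.mpr q.pos
  have hvQ : ((v : ℚ_[p])) ≠ 0 := Int.cast_ne_zero.mpr hv0.ne'
  set c : ℕ → ℤ := fun n => a n * v + b n * u with hc
  -- rewrite a n + b n ξ
  have key : ∀ n, (a n : ℚ_[p]) + (b n : ℚ_[p]) * ξ = (c n : ℚ_[p]) / (v : ℚ_[p]) := by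
    intro n
    rw [hq, Rat.cast_def]
    simp only [hc, hv, hu]
    push_cast
    field_simp
  set ε : ℝ := (α - β) / 3 with hε
  have hε0 : 0 < ε := by simp [hε]; linarith
  set K : ℝ := ((|u| + v : ℤ) : ℝ) with hK
  have hK1 : (1:ℝ) ≤ K := by
    rw [hK]
    have h0 := abs_nonneg u
    exact_mod_cast by omega
  have hKev : ∀ᶠ n : ℕ in atTop, K < Real.exp (ε * n) := by
    have ht : Tendsto (fun n : ℕ => ε * n) atTop atTop :=
      (tendsto_natCast_atTop_atTop (R := ℝ)).const_mul_atTop hε0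
    exact (Real.tendsto_exp_atTop.comp ht).eventually_gt_atTop K
  have main : ∀ᶠ n : ℕ in atTop, c n = 0 := by
    filter_upwards [h1 ε hε0, h2 ε hε0, hKev] with n hn1 hn2 hn3
    by_contra hcn
    have hlb : |((c n : ℤ) : ℝ)|⁻¹ ≤ ‖(a n : ℚ_[p]) + (b n : ℚ_[p]) * ξ‖ := by
      rw [key n, norm_div]
      have hvle : ‖(v : ℚ_[p])‖ ≤ 1 := Padic.norm_int_le_one v
      have hvpos : 0 < ‖(v : ℚ_[p])‖ := norm_pos_iff.mpr hvQ
      have hmain := padic_int_norm_lb p (c n) hcn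
      push_cast at hmain
      calc |((c n : ℤ) : ℝ)|⁻¹ ≤ ‖((c n) : ℚ_[p])‖ := hmain
        _ ≤ ‖((c n) : ℚ_[p])‖ / ‖(v : ℚ_[p])‖ := by
            rw [le_div_iff₀ hvpos]
            nlinarith [norm_nonneg ((c n : ℚ_[p]))]
    have hub : |((c n : ℤ) : ℝ)| ≤ K * Real.exp ((β + ε) * n) := by
      set M : ℝ := max |((a n : ℤ) : ℝ)| |((b n : ℤ) : ℝ)| with hM
      have hM0 : 0 ≤ M := le_trans (abs_nonneg _) (le_max_left _ _)
      have h1' : |((a n : ℤ) : ℝ)| ≤ M := le_max_left _ _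
      have h2' : |((b n : ℤ) : ℝ)| ≤ M := le_max_right _ _
      have hvR : (0:ℝ) < (v:ℝ) := by exact_mod_cast hv0
      have huR : (0:ℝ) ≤ |((u : ℤ) : ℝ)| := abs_nonneg _
      have habs : |((c n : ℤ) : ℝ)| ≤ K * M := by
        have : ((c n : ℤ) : ℝ) = (a n : ℝ) * (v : ℝ) + (b n : ℝ) * (u : ℝ) := by
          simp only [hc]; push_cast; ring
        rw [this]
        have hKval : K = |((u : ℤ) : ℝ)| + (v : ℝ) := by rw [hK]; push_cast; ring
        calc |((a n:ℤ):ℝ) * (v:ℝ) + ((b n:ℤ):ℝ) * (u:ℝ)|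
            ≤ |((a n:ℤ):ℝ)| * (v:ℝ) + |((b n:ℤ):ℝ)| * |((u:ℤ):ℝ)| := by
              calc _ ≤ |((a n:ℤ):ℝ) * (v:ℝ)| + |((b n:ℤ):ℝ) * (u:ℝ)| := abs_add_le _ _
                _ = _ := by rw [abs_mul, abs_mul, abs_of_pos hvR]
          _ ≤ M * (v:ℝ) + M * |((u:ℤ):ℝ)| := by nlinarith
          _ = K * M := by rw [hKval]; ring
      have hMexp : M ≤ Real.exp ((β + ε) * n) := hn2
      calc |((c n : ℤ) : ℝ)| ≤ K * M := habs
        _ ≤ K * Real.exp ((β + ε) * n) := by nlinarith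
    have hcpos : (0:ℝ) < |((c n : ℤ) : ℝ)| := by
      rw [abs_pos]; exact_mod_cast hcn
    have h5 : (K * Real.exp ((β + ε) * n))⁻¹ ≤ Real.exp ((-α + ε) * n) :=
      le_trans (le_trans (inv_anti₀ hcpos hub) hlb) hn1
    have hKpos : (0:ℝ) < K := by linarith
    have hepos := Real.exp_pos ((β + ε) * (n:ℝ))
    rw [inv_le_iff_one_le_mul₀ (by positivity)] at h5
    have hprod : Real.exp ((-α + ε) * n) * Real.exp ((β + ε) * n)
        = (Real.exp (ε * n))⁻¹ := by
      rw [← Real.exp_neg, ← Real.exp_add]; congr 1; rw [hε]; ring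
    rw [show Real.exp ((-α+ε)*n) * (K * Real.exp ((β+ε)*n))
        = K * (Real.exp ((-α+ε)*n) * Real.exp ((β+ε)*n)) by ring, hprod,
      ← div_eq_mul_inv, one_le_div (Real.exp_pos _)] at h5
    linarith
  obtain ⟨N, hN⟩ := eventually_atTop.mp main
  have hn0 : c (N + 1) = 0 := hN (N + 1) (by omega)
  have hn0' : c (N + 2) = 0 := hN (N + 2) (by omega)
  simp only [hc] at hn0 hn0'
  have hdet : (a (N+1) * b (N+2) - a (N+2) * b (N+1)) * v = 0 := by
    linear_combination b (N+2) * hn0 - b (N+1) * hn0'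
  rcases mul_eq_zero.mp hdet with h | h
  · exact h3 (N+1) (by omega) (by rw [show N + 1 + 1 = N + 2 by ring]; exact h)
  · exact hv0.ne' h
end

section
/- Let α > β > 0, p a prime, ξ ∈ ℚ_p, and suppose integer sequences (a_n), (b_n) satisfy |a_n + b_n ξ|_p ≤ exp(−αn + o(n)), max{|a_n|, |b_n|} ≤ exp(βn + o(n)), and a_n b_{n+1} − a_{n+1} b_n ≠ 0 for all n ≥ 1. Then the irrationality measure of ξ satisfies μ(ξ) ≤ α/(α−β). -/
open Filter

lemma aux_inv_abs_le_padic_norm (p : ℕ) [Fact p.Prime] {N : ℤ} (hN : N ≠ 0) :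
    ((|N| : ℤ) : ℝ)⁻¹ ≤ ‖(N : ℚ_[p])‖ := by
  have hp : p.Prime := Fact.out
  have hN' : (N : ℚ_[p]) ≠ 0 := Int.cast_ne_zero.2 hN
  rw [Padic.norm_eq_zpow_neg_valuation hN', Padic.valuation_intCast]
  set v := padicValInt p N with hv
  have hdvd : (p : ℤ) ^ v ∣ N := padicValInt_dvd N
  have hle : ((p : ℤ) ^ v : ℤ) ≤ |N| :=
    Int.le_of_dvd (abs_pos.2 hN) (hdvd.trans (self_dvd_abs N))
  have hle' : ((p : ℝ) ^ v) ≤ ((|N| : ℤ) : ℝ) := by exact_mod_cast hle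
  have hppos : (0 : ℝ) < (p : ℝ) ^ v := pow_pos (by exact_mod_cast hp.pos) v
  rw [zpow_neg, zpow_natCast]
  exact inv_anti₀ hppos hle'

theorem padic_irrationality_measure_bound (p : ℕ) [Fact p.Prime] (ξ : ℚ_[p])
    (α β : ℝ) (hαβ : β < α) (hβ : 0 < β)
    (a b : ℕ → ℤ)
    (h1 : ∀ ε > 0, ∀ᶠ n : ℕ in atTop,
      ‖(a n : ℚ_[p]) + (b n : ℚ_[p]) * ξ‖ ≤ Real.exp ((-α + ε) * n))
    (h2 : ∀ ε > 0, ∀ᶠ n : ℕ in atTop,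
      (max |a n| |b n| : ℝ) ≤ Real.exp ((β + ε) * n))
    (h3 : ∀ n : ℕ, 0 < n → a n * b (n + 1) - a (n + 1) * b n ≠ 0) :
    ∀ μ : ℝ, α / (α - β) < μ →
      {q : ℤ × ℤ | 0 < q.2 ∧ 0 < ‖ξ - (q.1 : ℚ_[p]) / (q.2 : ℚ_[p])‖ ∧
        ‖ξ - (q.1 : ℚ_[p]) / (q.2 : ℚ_[p])‖ < (max |q.1| q.2 : ℝ) ^ (-μ)}.Finite := by
  intro μ hμ
  have hα : 0 < α := hβ.trans hαβ
  have hab : 0 < α - β := sub_pos.2 hαβ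
  have hμα : α < μ * (α - β) := (div_lt_iff₀ hab).1 hμ
  have hμ1 : 1 < μ := by
    by_contra h
    push_neg at h
    have h' := mul_le_mul_of_nonneg_right h hab.le
    rw [one_mul] at h'
    linarith only [h', hμα, hβ]
  have hδ : 0 < (μ - 1) * α - μ * β := by linarith only [hμα]
  have h2μ : 0 < 2 * μ - 1 := by linarith only [hμ1]
  have hμpos : (0 : ℝ) < μ := by linarith only [hμ1]
  obtain ⟨ε, hε, hεα, hcoef⟩ : ∃ ε : ℝ, 0 < ε ∧ ε < α ∧
      ((μ - 1) * α - μ * β) / 2 ≤ (μ - 1) * (α - ε) - μ * (β + ε) := by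
    refine ⟨min (α / 2) (((μ - 1) * α - μ * β) / (2 * (2 * μ - 1))),
      lt_min (by linarith only [hα]) (by positivity),
      lt_of_le_of_lt (min_le_left _ _) (by linarith only [hα]), ?_⟩
    have h := min_le_right (α / 2) (((μ - 1) * α - μ * β) / (2 * (2 * μ - 1)))
    rw [le_div_iff₀ (by positivity)] at h
    linarith only [h]
  have hαε : 0 < α - ε := by linarith only [hεα]
  have hβε : 0 < β + ε := by linarith only [hβ, hε]
  have hlog2 : (0 : ℝ) < Real.log 2 := Real.log_pos one_lt_two
  obtain ⟨N0, hN0⟩ := eventually_atTop.1 ((h1 ε hε).and (h2 ε hε))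
  obtain ⟨M, hM1, hM2⟩ : ∃ M : ℝ, Real.exp ((α - ε) * N0 / μ) ≤ M ∧
      Real.exp (2 * (α * (Real.log 2 + 2 * (β + ε))) / ((μ - 1) * α - μ * β)) ≤ M :=
    ⟨max _ _, le_max_left _ _, le_max_right _ _⟩
  -- key bound
  have key : ∀ A B : ℤ, 0 < B → ‖ξ - (A : ℚ_[p]) / (B : ℚ_[p])‖ < (max |(A : ℝ)| (B : ℝ)) ^ (-μ) →
      max |(A : ℝ)| (B : ℝ) ≤ M := by
    intro A B hB happ
    by_contra hH
    push_neg at hH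
    set H : ℝ := max |(A : ℝ)| (B : ℝ) with hHdef
    have hH1 : (1 : ℝ) ≤ H := le_trans (by exact_mod_cast hB) (le_max_right _ _)
    have hHpos : (0 : ℝ) < H := by linarith only [hH1]
    set L : ℝ := Real.log H with hLdef
    have hL0 : 0 ≤ L := Real.log_nonneg hH1
    have hLlb1 : (α - ε) * N0 / μ < L :=
      (Real.lt_log_iff_exp_lt hHpos).2 (hM1.trans_lt hH)
    have hLlb2 : 2 * (α * (Real.log 2 + 2 * (β + ε))) / ((μ - 1) * α - μ * β) < L :=
      (Real.lt_log_iff_exp_lt hHpos).2 (hM2.trans_lt hH)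
    set t : ℝ := μ * L / (α - ε) with htdef
    have ht0 : 0 ≤ t := by
      rw [htdef]; exact div_nonneg (mul_nonneg hμpos.le hL0) hαε.le
    have htmul : t * (α - ε) = μ * L := by rw [htdef]; field_simp
    obtain ⟨n, hnt, hn1t⟩ : ∃ n : ℕ, t < (n : ℝ) ∧ (n : ℝ) ≤ t + 1 :=
      ⟨⌊t⌋₊ + 1, by push_cast; exact Nat.lt_floor_add_one t,
        by push_cast; linarith only [Nat.floor_le ht0]⟩
    have hnpos : 0 < n := by
      have : (0 : ℝ) < (n : ℝ) := lt_of_le_of_lt ht0 hnt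
      exact_mod_cast this
    have hN0t : (N0 : ℝ) < t := by
      have h' := (div_lt_iff₀ hμpos).1 hLlb1
      rw [htdef, lt_div_iff₀ hαε]
      linarith only [h']
    have hnN0 : N0 ≤ n := le_of_lt (by exact_mod_cast hN0t.trans hnt)
    -- find m with a m * B + b m * A ≠ 0
    obtain ⟨m, hmn, hmNe⟩ : ∃ m, (m = n ∨ m = n + 1) ∧ a m * B + b m * A ≠ 0 := by
      by_cases h : a n * B + b n * A = 0
      · refine ⟨n + 1, Or.inr rfl, fun h' => ?_⟩
        apply h3 n hnpos
        have hdet : (a n * b (n + 1) - a (n + 1) * b n) * B = 0 := by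
          linear_combination b (n + 1) * h - b n * h'
        exact (mul_eq_zero.1 hdet).resolve_right hB.ne'
      · exact ⟨n, Or.inl rfl, h⟩
    have hm_ge_n : n ≤ m := by rcases hmn with rfl | rfl; exacts [le_refl _, Nat.le_succ _]
    have hmN0 : N0 ≤ m := le_trans hnN0 hm_ge_n
    have hmub : (m : ℝ) ≤ t + 2 := by
      rcases hmn with rfl | rfl
      · linarith only [hn1t]
      · push_cast; linarith only [hn1t]
    obtain ⟨hb1, hb2⟩ := hN0 m hmN0
    have hBne : ((B : ℚ_[p])) ≠ 0 := Int.cast_ne_zero.2 hB.ne'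
    set N : ℤ := a m * B + b m * A with hNdef
    have hid : (N : ℚ_[p]) = (B : ℚ_[p]) * ((a m : ℚ_[p]) + (b m : ℚ_[p]) * ξ)
        - ((b m * B : ℤ) : ℚ_[p]) * (ξ - (A : ℚ_[p]) / (B : ℚ_[p])) := by
      rw [hNdef]
      push_cast
      field_simp
      ring
    have hHmu : H ^ (-μ) = Real.exp (-(μ * L)) := by
      rw [Real.rpow_def_of_pos hHpos]
      ring_nf
      rw [hLdef, mul_comm]
    have hnorm1 : ‖(B : ℚ_[p]) * ((a m : ℚ_[p]) + (b m : ℚ_[p]) * ξ)‖ < H ^ (-μ) := by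
      calc ‖(B : ℚ_[p]) * ((a m : ℚ_[p]) + (b m : ℚ_[p]) * ξ)‖
          = ‖(B : ℚ_[p])‖ * ‖(a m : ℚ_[p]) + (b m : ℚ_[p]) * ξ‖ := norm_mul _ _
        _ ≤ 1 * Real.exp ((-α + ε) * m) :=
            mul_le_mul (Padic.norm_int_le_one _) hb1 (norm_nonneg _) zero_le_one
        _ < H ^ (-μ) := by
            rw [one_mul, hHmu]
            apply Real.exp_lt_exp.2
            have h1' : (-α + ε) * m ≤ (-α + ε) * n :=
              mul_le_mul_of_nonpos_left (by exact_mod_cast hm_ge_n) (by linarith only [hεα])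
            have hprod := mul_lt_mul_of_pos_right hnt hαε
            linarith only [h1', hprod, htmul]
    have hnorm2 : ‖((b m * B : ℤ) : ℚ_[p]) * (ξ - (A : ℚ_[p]) / (B : ℚ_[p]))‖ < H ^ (-μ) := by
      calc ‖((b m * B : ℤ) : ℚ_[p]) * (ξ - (A : ℚ_[p]) / (B : ℚ_[p]))‖
          = ‖((b m * B : ℤ) : ℚ_[p])‖ * ‖ξ - (A : ℚ_[p]) / (B : ℚ_[p])‖ := norm_mul _ _
        _ ≤ 1 * ‖ξ - (A : ℚ_[p]) / (B : ℚ_[p])‖ :=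
            mul_le_mul_of_nonneg_right (Padic.norm_int_le_one _) (norm_nonneg _)
        _ < H ^ (-μ) := by rw [one_mul]; exact happ
    have hNp : ‖(N : ℚ_[p])‖ < H ^ (-μ) := by
      rw [hid, sub_eq_add_neg]
      refine lt_of_le_of_lt (Padic.nonarchimedean _ _) ?_
      rw [norm_neg]
      exact max_lt hnorm1 hnorm2
    have hNl : ((|N| : ℤ) : ℝ)⁻¹ ≤ ‖(N : ℚ_[p])‖ := aux_inv_abs_le_padic_norm p hmNe
    set E : ℝ := Real.exp ((β + ε) * m) with hEdef
    have hE : 0 < E := Real.exp_pos _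
    have hNu : ((|N| : ℤ) : ℝ) ≤ 2 * E * H := by
      have h' : |N| ≤ |a m| * B + |b m| * |A| := by
        calc |N| ≤ |a m * B| + |b m * A| := abs_add_le _ _
          _ = |a m| * B + |b m| * |A| := by rw [abs_mul, abs_mul, abs_of_pos hB]
      have habs : ((|N| : ℤ) : ℝ) ≤ |(a m : ℝ)| * (B : ℝ) + |(b m : ℝ)| * |(A : ℝ)| := by
        exact_mod_cast h'
      have hma : |(a m : ℝ)| ≤ E := le_trans (le_max_left _ _) hb2
      have hmb : |(b m : ℝ)| ≤ E := le_trans (le_max_right _ _) hb2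
      have hAH : |(A : ℝ)| ≤ H := le_max_left _ _
      have hBH : (B : ℝ) ≤ H := le_max_right _ _
      have hBpos : (0 : ℝ) < (B : ℝ) := by exact_mod_cast hB
      have hp1 : |(a m : ℝ)| * (B : ℝ) ≤ E * H := mul_le_mul hma hBH hBpos.le hE.le
      have hp2 : |(b m : ℝ)| * |(A : ℝ)| ≤ E * H := mul_le_mul hmb hAH (abs_nonneg _) hE.le
      linarith only [habs, hp1, hp2]
    have hNabs : (0 : ℝ) < ((|N| : ℤ) : ℝ) := by exact_mod_cast abs_pos.2 hmNe
    have hstep : (2 * E * H)⁻¹ < H ^ (-μ) :=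
      lt_of_le_of_lt (inv_anti₀ hNabs hNu) (lt_of_le_of_lt hNl hNp)
    have hHmupos : (0 : ℝ) < H ^ μ := Real.rpow_pos_of_pos hHpos μ
    have hpow : H ^ μ < 2 * E * H := by
      rw [Real.rpow_neg hHpos.le] at hstep
      exact (inv_lt_inv₀ (by positivity) hHmupos).1 hstep
    have hfin : μ * L < Real.log 2 + (β + ε) * m + L := by
      have hlog := Real.log_lt_log hHmupos hpow
      rw [Real.log_rpow hHpos, Real.log_mul (by positivity) (ne_of_gt hHpos),
        Real.log_mul (by norm_num) hE.ne', Real.log_exp] at hlog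
      linarith only [hlog]
    -- final contradiction
    have e1 : (β + ε) * (m : ℝ) ≤ (β + ε) * (t + 2) := mul_le_mul_of_nonneg_left hmub hβε.le
    have e2 : μ * L - L - (β + ε) * t < Real.log 2 + 2 * (β + ε) := by
      linarith only [hfin, e1]
    have e4 := mul_lt_mul_of_pos_right e2 hαε
    have e5 : (β + ε) * t * (α - ε) = (β + ε) * (μ * L) := by rw [mul_assoc, htmul]
    have e6 : ((μ - 1) * (α - ε) - μ * (β + ε)) * L <
        (Real.log 2 + 2 * (β + ε)) * (α - ε) := by nlinarith only [e4, e5]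
    have e8 := mul_le_mul_of_nonneg_right hcoef hL0
    have e9 : (Real.log 2 + 2 * (β + ε)) * (α - ε) ≤ α * (Real.log 2 + 2 * (β + ε)) := by
      have h' : (0 : ℝ) ≤ (Real.log 2 + 2 * (β + ε)) * ε :=
        mul_nonneg (by linarith only [hlog2, hβε]) hε.le
      linarith only [h']
    have hKL : 2 * (α * (Real.log 2 + 2 * (β + ε))) < L * ((μ - 1) * α - μ * β) :=
      (div_lt_iff₀ hδ).1 hLlb2
    linarith only [e6, e8, e9, hKL]
  -- finiteness
  apply Set.Finite.subset ((Set.finite_Icc (-⌈M⌉) ⌈M⌉).prod (Set.finite_Icc 1 ⌈M⌉))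
  rintro ⟨A, B⟩ ⟨hB, _, happ⟩
  have hle : max |(A : ℝ)| (B : ℝ) ≤ M := key A B hB happ
  have hA' : |A| ≤ ⌈M⌉ := by
    have h' : ((|A| : ℤ) : ℝ) ≤ (⌈M⌉ : ℝ) := by
      rw [Int.cast_abs]
      exact le_trans (le_trans (le_max_left _ _) hle) (Int.le_ceil M)
    exact_mod_cast h'
  have hB' : B ≤ ⌈M⌉ := by
    have h' : ((B : ℤ) : ℝ) ≤ (⌈M⌉ : ℝ) :=
      le_trans (le_trans (le_max_right _ _) hle) (Int.le_ceil M)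
    exact_mod_cast h'
  exact ⟨Set.mem_Icc.2 ⟨neg_le_of_abs_le hA', le_of_abs_le hA'⟩, Set.mem_Icc.2 ⟨hB, hB'⟩⟩
end

section
/- Let f : ℤ_p → ℚ_p be strictly differentiable (f(x) − f(y) = (x−y)g(x,y) for a continuous g on ℤ_p × ℤ_p). Then for any positive integer k, the Volkenborn integrals satisfy ∫_{ℤ_p} f(t+k) dt = ∫_{ℤ_p} f(t) dt + Σ_{ℓ=0}^{k−1} f′(ℓ). -/
open Filter

/-- `I` is the Volkenborn integral of `f : ℤ_p → ℚ_p`: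
`I = lim_{n→∞} p^{-n} ∑_{j=0}^{p^n - 1} f(j)`. -/
def IsVolkenbornIntegral (p : ℕ) [Fact p.Prime] (f : ℤ_[p] → ℚ_[p]) (I : ℚ_[p]) : Prop :=
  Tendsto (fun n : ℕ => ((p : ℚ_[p]) ^ n)⁻¹ * ∑ j ∈ Finset.range (p ^ n), f (j : ℤ_[p]))
    atTop (nhds I)

theorem volkenborn_translation (p : ℕ) [Fact p.Prime]
    (f : ℤ_[p] → ℚ_[p]) (g : ℤ_[p] × ℤ_[p] → ℚ_[p])
    (hg : Continuous g)
    (hfg : ∀ x y : ℤ_[p], f x - f y = ((x : ℚ_[p]) - (y : ℚ_[p])) * g (x, y))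
    (k : ℕ) (hk : 0 < k) (I J : ℚ_[p])
    (hI : IsVolkenbornIntegral p f I)
    (hJ : IsVolkenbornIntegral p (fun t => f (t + (k : ℤ_[p]))) J) :
    J = I + ∑ l ∈ Finset.range k, g ((l : ℤ_[p]), (l : ℤ_[p])) := by
  have hpprime : p.Prime := Fact.out
  have hpne : ((p : ℚ_[p])) ≠ 0 := Nat.cast_ne_zero.mpr hpprime.ne_zero
  have key : ∀ n : ℕ,
      (((p : ℚ_[p]) ^ n)⁻¹ * ∑ j ∈ Finset.range (p ^ n), f ((j : ℤ_[p]) + (k : ℤ_[p])))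
      - ((p : ℚ_[p]) ^ n)⁻¹ * ∑ j ∈ Finset.range (p ^ n), f (j : ℤ_[p])
      = ∑ l ∈ Finset.range k, g ((l : ℤ_[p]) + (p : ℤ_[p]) ^ n, (l : ℤ_[p])) := by
    intro n
    have h1 : ∑ j ∈ Finset.range (k + p ^ n), f (j : ℤ_[p])
        = (∑ j ∈ Finset.range k, f (j : ℤ_[p]))
          + ∑ j ∈ Finset.range (p ^ n), f ((j : ℤ_[p]) + (k : ℤ_[p])) := by
      rw [Finset.sum_range_add]
      congr 1
      refine Finset.sum_congr rfl fun j _ => ?_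
      congr 1
      push_cast
      ring
    have h2 : ∑ j ∈ Finset.range (p ^ n + k), f (j : ℤ_[p])
        = (∑ j ∈ Finset.range (p ^ n), f (j : ℤ_[p]))
          + ∑ l ∈ Finset.range k, f ((l : ℤ_[p]) + (p : ℤ_[p]) ^ n) := by
      rw [Finset.sum_range_add]
      congr 1
      refine Finset.sum_congr rfl fun l _ => ?_
      congr 1
      push_cast
      ring
    have hdiff : (∑ j ∈ Finset.range (p ^ n), f ((j : ℤ_[p]) + (k : ℤ_[p])))
        - ∑ j ∈ Finset.range (p ^ n), f (j : ℤ_[p])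
        = ∑ l ∈ Finset.range k,
            (f ((l : ℤ_[p]) + (p : ℤ_[p]) ^ n) - f (l : ℤ_[p])) := by
      have := h1
      rw [add_comm k (p ^ n), h2] at this
      rw [Finset.sum_sub_distrib]
      linear_combination -this
    rw [← mul_sub, hdiff, Finset.mul_sum]
    refine Finset.sum_congr rfl fun l _ => ?_
    rw [hfg]
    have hc : (((l : ℤ_[p]) + (p : ℤ_[p]) ^ n : ℤ_[p]) : ℚ_[p]) - ((l : ℤ_[p]) : ℚ_[p])
        = (p : ℚ_[p]) ^ n := by push_cast; ring
    rw [hc, ← mul_assoc, inv_mul_cancel₀ (pow_ne_zero _ hpne), one_mul]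
  -- the difference tends to J - I
  have hJI : Tendsto (fun n : ℕ =>
      ∑ l ∈ Finset.range k, g ((l : ℤ_[p]) + (p : ℤ_[p]) ^ n, (l : ℤ_[p])))
      atTop (nhds (J - I)) := by
    have := hJ.sub hI
    simpa only [key] using this
  -- it also tends to the sum of g (l, l)
  have hpn0 : Tendsto (fun n : ℕ => (p : ℤ_[p]) ^ n) atTop (nhds 0) := by
    apply tendsto_pow_atTop_nhds_zero_of_norm_lt_one
    rw [PadicInt.norm_p]
    exact inv_lt_one_of_one_lt₀ (by exact_mod_cast hpprime.one_lt)
  have hlim : Tendsto (fun n : ℕ =>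
      ∑ l ∈ Finset.range k, g ((l : ℤ_[p]) + (p : ℤ_[p]) ^ n, (l : ℤ_[p])))
      atTop (nhds (∑ l ∈ Finset.range k, g ((l : ℤ_[p]), (l : ℤ_[p])))) := by
    refine tendsto_finset_sum _ fun l _ => ?_
    have h1 : Tendsto (fun n : ℕ => (((l : ℤ_[p]) + (p : ℤ_[p]) ^ n, (l : ℤ_[p])) :
        ℤ_[p] × ℤ_[p])) atTop (nhds ((l : ℤ_[p]), (l : ℤ_[p]))) := by
      refine Tendsto.prodMk_nhds ?_ tendsto_const_nhds
      have := tendsto_const_nhds (x := (l : ℤ_[p])) (f := atTop (α := ℕ)) |>.add hpn0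
      simpa using this
    exact (hg.tendsto _).comp h1
  have := tendsto_nhds_unique hJI hlim
  exact sub_eq_iff_eq_add'.mp this
end

section
/- Let f : ℤ_p → ℚ_p be strictly differentiable and define △(f) = min{ inf_{k≥1} v_p((f(k) − f(k_−))/(k − k_−)), 1 + v_p(f(0)) }, where k_− is obtained from k by deleting the leading p-adic digit. Then v_p(∫_{ℤ_p} f(t) dt) ≥ △(f) − 1. -/
open Filter

/-- `kminus p k` is `k` with its leading `p`-adic digit deleted. -/
def kminus (p k : ℕ) : ℕ := k % p ^ (Nat.log p k)

/-- `TriangleGE p f c` expresses `△(f) ≥ c`, i.e. both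
`v_p((f(k) - f(k₋))/(k - k₋)) ≥ c` for all `k ≥ 1` and `1 + v_p(f(0)) ≥ c`
(with `v_p(0) = +∞`), stated in terms of norms. -/
def TriangleGE (p : ℕ) [Fact p.Prime] (f : ℤ_[p] → ℚ_[p]) (c : ℤ) : Prop :=
  (∀ k : ℕ, 1 ≤ k →
    ‖f (k : ℤ_[p]) - f (kminus p k : ℤ_[p])‖ ≤
      ‖((k : ℚ_[p]) - (kminus p k : ℚ_[p]))‖ * (p : ℝ) ^ (-c))
  ∧ ‖f 0‖ ≤ (p : ℝ) ^ (-(c - 1))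

private lemma sum_mod_aux (p : ℕ) [Fact p.Prime] (F : ℕ → ℚ_[p]) (a b : ℕ) :
    ∑ j ∈ Finset.range (a * b), F (j % b) = a • ∑ j ∈ Finset.range b, F j := by
  induction a with
  | zero => simp
  | succ a ih =>
    have h : (a + 1) * b = a * b + b := by ring
    rw [h, Finset.sum_range_add, ih, succ_nsmul]
    congr 1
    refine Finset.sum_congr rfl fun i hi => ?_
    rw [Finset.mem_range] at hi
    have h2 : (a * b + i) % b = i := by
      rw [Nat.mul_comm, Nat.mul_add_mod, Nat.mod_eq_of_lt hi]
    rw [h2]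

private lemma key_bound (p : ℕ) [Fact p.Prime] (f : ℤ_[p] → ℚ_[p]) (c : ℤ)
    (hc : TriangleGE p f c) (n : ℕ) :
    ‖∑ j ∈ Finset.range (p ^ n), f (j : ℤ_[p])‖ ≤ (p : ℝ) ^ (1 - c - n) := by
  have hp : (1 : ℝ) < (p : ℝ) := by
    exact_mod_cast (Fact.out : p.Prime).one_lt
  have hp0 : (0 : ℝ) < (p : ℝ) := lt_trans one_pos hp
  induction n with
  | zero => simpa using hc.2
  | succ n ih =>
    have hdecomp : ∑ j ∈ Finset.range (p ^ (n + 1)), f (j : ℤ_[p]) =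
        (∑ j ∈ Finset.range (p ^ (n + 1)),
          (f (j : ℤ_[p]) - f ((j % p ^ n : ℕ) : ℤ_[p]))) +
        p • ∑ j ∈ Finset.range (p ^ n), f (j : ℤ_[p]) := by
      have h1 : p ^ (n + 1) = p * p ^ n := by ring
      rw [← sum_mod_aux p (fun j => f ((j : ℕ) : ℤ_[p])) p (p ^ n), ← h1,
        ← Finset.sum_add_distrib]
      exact Finset.sum_congr rfl fun j _ => by ring
    rw [hdecomp]
    have hb : (0 : ℝ) ≤ (p : ℝ) ^ (1 - c - (n + 1 : ℕ)) := le_of_lt (zpow_pos hp0 _)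
    refine le_trans (Padic.nonarchimedean _ _) (max_le ?_ ?_)
    · -- sum of differences
      refine IsUltrametricDist.norm_sum_le_of_forall_le_of_nonneg hb ?_
      intro j hj
      rw [Finset.mem_range] at hj
      by_cases hjn : j < p ^ n
      · rw [Nat.mod_eq_of_lt hjn, sub_self, norm_zero]; exact hb
      · push_neg at hjn
        have hlog : Nat.log p j = n :=
          Nat.log_eq_of_pow_le_of_lt_pow hjn hj
        have hk : j % p ^ n = kminus p j := by rw [kminus, hlog]
        have hj1 : 1 ≤ j := le_trans (Nat.one_le_pow _ _ (Fact.out : p.Prime).pos) hjn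
        have := hc.1 j hj1
        rw [hk]
        refine le_trans this ?_
        have hnorm : ‖((j : ℚ_[p]) - ((kminus p j : ℕ) : ℚ_[p]))‖ ≤ (p : ℝ) ^ (-(n : ℤ)) := by
          have hle : kminus p j ≤ j := Nat.mod_le _ _
          have hcast : ((j : ℚ_[p]) - ((kminus p j : ℕ) : ℚ_[p])) =
              ((j - kminus p j : ℕ) : ℚ_[p]) := by
            push_cast [Nat.cast_sub hle]; ring
          have hsub : j - kminus p j = p ^ n * (j / p ^ n) := by
            have := Nat.div_add_mod j (p ^ n)
            rw [kminus, hlog]; omega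
          rw [hcast, hsub]
          push_cast
          rw [norm_mul, norm_pow, Padic.norm_p]
          calc ((p : ℝ)⁻¹) ^ n * ‖((j / p ^ n : ℕ) : ℚ_[p])‖
              ≤ ((p : ℝ)⁻¹) ^ n * 1 := by
                refine mul_le_mul_of_nonneg_left ?_ (by positivity)
                exact_mod_cast Padic.norm_int_le_one ((j / p ^ n : ℕ) : ℤ)
            _ = (p : ℝ) ^ (-(n : ℤ)) := by
                rw [mul_one, ← zpow_natCast, inv_zpow, ← zpow_neg]
        calc ‖((j : ℚ_[p]) - ((kminus p j : ℕ) : ℚ_[p]))‖ * (p : ℝ) ^ (-c)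
            ≤ (p : ℝ) ^ (-(n : ℤ)) * (p : ℝ) ^ (-c) := by
              refine mul_le_mul_of_nonneg_right hnorm (le_of_lt (zpow_pos hp0 _))
          _ = (p : ℝ) ^ (1 - c - (n + 1 : ℕ)) := by
              rw [← zpow_add₀ (ne_of_gt hp0)]
              congr 1
              push_cast
              ring
    · -- p • S_n
      rw [nsmul_eq_mul, norm_mul, Padic.norm_p]
      calc (p : ℝ)⁻¹ * ‖∑ j ∈ Finset.range (p ^ n), f (j : ℤ_[p])‖
          ≤ (p : ℝ)⁻¹ * (p : ℝ) ^ (1 - c - n) := by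
            exact mul_le_mul_of_nonneg_left ih (by positivity)
        _ = (p : ℝ) ^ (1 - c - (n + 1 : ℕ)) := by
            rw [← zpow_neg_one, ← zpow_add₀ (ne_of_gt hp0)]
            congr 1
            push_cast
            ring

theorem volkenborn_integral_norm_estimate (p : ℕ) [Fact p.Prime]
    (f : ℤ_[p] → ℚ_[p]) (g : ℤ_[p] × ℤ_[p] → ℚ_[p])
    (hg : Continuous g)
    (hfg : ∀ x y : ℤ_[p], f x - f y = ((x : ℚ_[p]) - (y : ℚ_[p])) * g (x, y))
    (I : ℚ_[p]) (hI : IsVolkenbornIntegral p f I)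
    (c : ℤ) (hc : TriangleGE p f c) :
    ‖I‖ ≤ (p : ℝ) ^ (-(c - 1)) := by
  have hp : (1 : ℝ) < (p : ℝ) := by exact_mod_cast (Fact.out : p.Prime).one_lt
  have hp0 : (0 : ℝ) < (p : ℝ) := lt_trans one_pos hp
  refine le_of_tendsto' hI.norm fun n => ?_
  rw [norm_mul, norm_inv, norm_pow, Padic.norm_p, inv_pow, inv_inv]
  calc (p : ℝ) ^ n * ‖∑ j ∈ Finset.range (p ^ n), f (j : ℤ_[p])‖
      ≤ (p : ℝ) ^ n * (p : ℝ) ^ (1 - c - n) := by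
        exact mul_le_mul_of_nonneg_left (key_bound p f c hc n) (by positivity)
    _ = (p : ℝ) ^ (-(c - 1)) := by
        rw [← zpow_natCast, ← zpow_add₀ (ne_of_gt hp0)]
        congr 1
        ring
end

section
/- For integers n > 0 and j, let f(t) = C(t+j, n) = (t+j)(t+j−1)···(t+j−n+1)/n! as a function ℤ_p → ℚ_p. Then △(f) ≥ −⌊log n / log p⌋, where △(f) = min{ inf_{k≥1} v_p((f(k) − f(k_−))/(k − k_−)), 1 + v_p(f(0)) }. -/
/-- The binomial polynomial `C(t+j, n) = (t+j)(t+j-1)⋯(t+j-n+1)/n!`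
as a function `ℤ_p → ℚ_p`. -/
noncomputable def binomFun (p : ℕ) [Fact p.Prime] (n : ℕ) (j : ℤ) (t : ℤ_[p]) : ℚ_[p] :=
  (∏ i ∈ Finset.range n, ((t : ℚ_[p]) + (j : ℚ_[p]) - (i : ℚ_[p]))) / (n.factorial : ℚ_[p])

open Finset

section Aux

variable {p : ℕ} [hp : Fact p.Prime]

private lemma ultra_sum_le {ι : Type*} (s : Finset ι) (f : ι → ℚ_[p]) {B : ℝ} (hB : 0 ≤ B)
    (h : ∀ i ∈ s, ‖f i‖ ≤ B) : ‖∑ i ∈ s, f i‖ ≤ B := by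
  classical
  induction s using Finset.induction_on with
  | empty => simpa using hB
  | insert _ _ hx ih =>
    rw [Finset.sum_insert hx]
    exact (Padic.nonarchimedean _ _).trans (max_le (h _ (mem_insert_self _ _))
      (ih fun i hi => h i (mem_insert_of_mem hi)))

private lemma norm_natCast_ge (n i : ℕ) (hi : 0 < i) (hin : i ≤ n) :
    (p:ℝ) ^ (-(Nat.log p n : ℤ)) ≤ ‖(i : ℚ_[p])‖ := by
  have hp1 : (1:ℝ) < p := by exact_mod_cast hp.out.one_lt
  have hne : (i : ℚ_[p]) ≠ 0 := Nat.cast_ne_zero.mpr hi.ne'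
  rw [Padic.norm_eq_zpow_neg_valuation hne, Padic.valuation_natCast]
  apply zpow_le_zpow_right₀ hp1.le
  simp only [neg_le_neg_iff, Int.ofNat_le]
  have h1 : p ^ padicValNat p i ≤ n :=
    le_trans (Nat.le_of_dvd hi pow_padicValNat_dvd) hin
  exact (Nat.le_log_iff_pow_le hp.out.one_lt (by omega)).mpr h1

private lemma norm_choose_le (n m i : ℕ) (hm : 0 < m) (hi : i < n) :
    ‖((m.choose (i+1) : ℤ) : ℚ_[p])‖ ≤ ‖(m : ℚ_[p])‖ * (p:ℝ) ^ (Nat.log p n : ℤ) := by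
  have key : (m.choose (i+1)) * (i+1) = m * ((m-1).choose i) := by
    have := Nat.add_one_mul_choose_eq (m-1) i
    rw [Nat.sub_add_cancel hm] at this
    omega
  have hkey : ((m.choose (i+1) : ℚ_[p])) * ((i+1 : ℕ) : ℚ_[p]) =
      (m : ℚ_[p]) * (((m-1).choose i : ℕ) : ℚ_[p]) := by
    exact_mod_cast congrArg (Nat.cast : ℕ → ℚ_[p]) key
  have hnorm : ‖(m.choose (i+1) : ℚ_[p])‖ * ‖((i+1 : ℕ) : ℚ_[p])‖ ≤ ‖(m : ℚ_[p])‖ := by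
    rw [← norm_mul, hkey, norm_mul]
    calc ‖(m : ℚ_[p])‖ * ‖(((m-1).choose i : ℕ) : ℚ_[p])‖
        ≤ ‖(m : ℚ_[p])‖ * 1 := by
          gcongr
          exact_mod_cast Padic.norm_int_le_one (((m-1).choose i : ℤ))
      _ = ‖(m : ℚ_[p])‖ := mul_one _
  have hge := norm_natCast_ge (p := p) n (i+1) (Nat.succ_pos i) hi
  have hgt : (0:ℝ) < (p:ℝ) ^ (-(Nat.log p n : ℤ)) :=
    zpow_pos (by exact_mod_cast hp.out.pos) _
  have h1 : ‖(m.choose (i+1) : ℚ_[p])‖ * (p:ℝ) ^ (-(Nat.log p n : ℤ)) ≤ ‖(m : ℚ_[p])‖ := by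
    refine le_trans ?_ hnorm
    exact mul_le_mul_of_nonneg_left hge (norm_nonneg _)
  have := (le_div_iff₀ hgt).mpr h1
  rw [div_eq_mul_inv, ← zpow_neg, neg_neg] at this
  exact_mod_cast this

private lemma choose_vandermonde (x : ℤ) (m n : ℕ) :
    Ring.choose (x + (m:ℤ)) n - Ring.choose x n =
      ∑ i ∈ Finset.range n, ((m.choose (i+1) : ℤ)) * Ring.choose x (n - (i+1)) := by
  rw [add_comm x (m:ℤ), Ring.add_choose_eq n (Commute.all _ _),
    Finset.Nat.sum_antidiagonal_eq_sum_range_succ_mk, Finset.sum_range_succ']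
  simp only [Ring.choose_zero_right, one_mul, Nat.sub_zero, Ring.choose_natCast]
  ring

private lemma prod_eq_desc (x : ℤ) (n : ℕ) :
    ∏ i ∈ Finset.range n, ((x:ℚ_[p]) - i) = (((descPochhammer ℤ n).smeval x : ℤ) : ℚ_[p]) := by
  induction n with
  | zero => simp [descPochhammer_zero, Polynomial.smeval_one]
  | succ n ih =>
    rw [Finset.prod_range_succ, ih, descPochhammer_succ_right, Polynomial.smeval_mul,
      Polynomial.smeval_sub, Polynomial.smeval_X, Polynomial.smeval_natCast]
    push_cast
    ring_nf
    norm_cast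

private lemma binomFun_natCast (n : ℕ) (j : ℤ) (k : ℕ) :
    binomFun p n j (k : ℤ_[p]) = ((Ring.choose ((k:ℤ) + j) n : ℤ) : ℚ_[p]) := by
  have h1 : ∀ i : ℕ, ((k : ℤ_[p]) : ℚ_[p]) + (j : ℚ_[p]) - (i : ℚ_[p]) =
      ((((k:ℤ) + j : ℤ) : ℚ_[p])) - (i : ℚ_[p]) := by
    intro i; push_cast; ring
  rw [binomFun]
  rw [Finset.prod_congr rfl (fun i _ => h1 i), prod_eq_desc, Ring.descPochhammer_eq_factorial_smul_choose, nsmul_eq_mul]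
  rw [Int.cast_mul, Int.cast_natCast, mul_div_cancel_left₀]
  exact (Nat.cast_ne_zero (R := ℚ_[p])).mpr n.factorial_ne_zero

end Aux

theorem triangle_binom (p : ℕ) [Fact p.Prime] (n : ℕ) (hn : 0 < n) (j : ℤ) :
    TriangleGE p (binomFun p n j) (-(Nat.log p n : ℤ)) := by
  have hp := (Fact.out : p.Prime)
  have hp1R : (1:ℝ) ≤ p := by exact_mod_cast hp.one_lt.le
  constructor
  · intro k hk
    set e := Nat.log p k with he
    have hple : p ^ e ≤ k := Nat.pow_log_le_self p (by omega)
    set km := kminus p k with hkm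
    have hklt : km < k := by
      calc km = k % p ^ e := rfl
        _ < p ^ e := Nat.mod_lt _ (Nat.pow_pos hp.pos)
        _ ≤ k := hple
    set m := k - km with hm
    have hmpos : 0 < m := by omega
    have hksplit : k = kminus p k + m := by omega
    -- rewrite the norm of the difference of the arguments
    have harg : ((k : ℚ_[p]) - (km : ℚ_[p])) = (m : ℚ_[p]) := by
      have h' : (k : ℚ_[p]) = (km : ℚ_[p]) + (m : ℚ_[p]) := by exact_mod_cast hksplit
      rw [h']; ring
    -- rewrite f values
    set x : ℤ := (km : ℤ) + j with hx
    have hxk : (k:ℤ) + j = x + (m:ℤ) := by rw [hx]; omega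
    have hval : binomFun p n j (k : ℤ_[p]) - binomFun p n j (km : ℤ_[p]) =
        ((Ring.choose (x + (m:ℤ)) n - Ring.choose x n : ℤ) : ℚ_[p]) := by
      rw [binomFun_natCast, binomFun_natCast, hxk]
      push_cast
      ring
    rw [hval, harg, choose_vandermonde]
    push_cast
    rw [neg_neg]
    apply ultra_sum_le
    · positivity
    · intro i hi
      rw [norm_mul]
      calc ‖((m.choose (i+1) : ℤ) : ℚ_[p])‖ * ‖((Ring.choose x (n - (i+1)) : ℤ) : ℚ_[p])‖
          ≤ ‖((m.choose (i+1) : ℤ) : ℚ_[p])‖ * 1 := by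
            gcongr
            exact Padic.norm_int_le_one _
        _ = ‖((m.choose (i+1) : ℤ) : ℚ_[p])‖ := mul_one _
        _ ≤ ‖(m : ℚ_[p])‖ * (p:ℝ) ^ (Nat.log p n : ℤ) :=
            norm_choose_le n m i hmpos (Finset.mem_range.mp hi)
  · have h0 : binomFun p n j (0 : ℤ_[p]) = ((Ring.choose j n : ℤ) : ℚ_[p]) := by
      have := binomFun_natCast (p := p) n j 0
      simpa using this
    rw [h0]
    calc ‖((Ring.choose j n : ℤ) : ℚ_[p])‖ ≤ 1 := Padic.norm_int_le_one _
      _ ≤ (p : ℝ) ^ (-(-(Nat.log p n : ℤ) - 1)) := by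
          rw [neg_sub, sub_neg_eq_add]
          exact one_le_zpow₀ hp1R (by positivity)
end
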